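/- Let n ≥ 2 and let X ⊆ (0,∞) have Property (W_n). Then for all x, y, z ∈ X one has x + y + z − 2·min(x,y,z) ∈ X. -/

import Mathlib

open BoxIntegral

/-- The (closed) set of points of an `n`-dimensional box. -/
def boxSet {n : ℕ} (B : Box (Fin n)) : Set (Fin n → ℝ) :=
  Set.Icc B.lower B.upper

/-- The box `B` has a side whose length belongs to `X`. -/
def hasSideIn {n : ℕ} (X : Set ℝ) (B : Box (Fin n)) : Prop :=
  ∃ i : Fin n, B.upper i - B.lower i ∈ X

/-- `Q` is a partition of `P`: a finite collection of boxes with pairwise disjoint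
interiors whose union is `P`. -/
def isBoxPartition {n k : ℕ} (P : Box (Fin n)) (Q : Fin k → Box (Fin n)) : Prop :=
  (∀ j j' : Fin k, j ≠ j' →
    Disjoint (interior (boxSet (Q j))) (interior (boxSet (Q j')))) ∧
  (⋃ j, boxSet (Q j)) = boxSet P

/-- Property (W_n): for every `n`-dimensional box `P` and every partition of `P`
such that each constituent box has a side with length in `X`, the box `P` itself
has a side with length in `X`. -/
def PropertyW (n : ℕ) (X : Set ℝ) : Prop :=
  ∀ (P : Box (Fin n)) (k : ℕ) (Q : Fin k → Box (Fin n)),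
    isBoxPartition P Q → (∀ j, hasSideIn X (Q j)) → hasSideIn X P

/-- A box in `Fin n → ℝ` which is `[I1, I2] × [J1, J2]` in the first two
coordinates and `[0, K]` in the remaining ones. -/
def box2 (n : ℕ) (I1 I2 J1 J2 K : ℝ) (hI : I1 < I2) (hJ : J1 < J2) (hK : 0 < K) :
    Box (Fin n) :=
  ⟨fun i => if (i : ℕ) = 0 then I1 else if (i : ℕ) = 1 then J1 else 0,
   fun i => if (i : ℕ) = 0 then I2 else if (i : ℕ) = 1 then J2 else K,
   fun i => by split_ifs <;> assumption⟩

lemma interior_boxSet {n : ℕ} (B : Box (Fin n)) :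
    interior (boxSet B) = Set.univ.pi fun i => Set.Ioo (B.lower i) (B.upper i) := by
  rw [boxSet, ← Set.pi_univ_Icc, interior_pi_set Set.finite_univ]
  simp [interior_Icc]

lemma mem_boxSet_box2 {n : ℕ} {e f : Fin n} (he : (e : ℕ) = 0) (hf : (f : ℕ) = 1)
    {I1 I2 J1 J2 K : ℝ} {hI : I1 < I2} {hJ : J1 < J2} {hK : 0 < K} {p : Fin n → ℝ}
    (h0 : ∀ i, 0 ≤ p i) (hKp : ∀ i, p i ≤ K)
    (h1 : I1 ≤ p e) (h2 : p e ≤ I2) (h3 : J1 ≤ p f) (h4 : p f ≤ J2) :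
    p ∈ boxSet (box2 n I1 I2 J1 J2 K hI hJ hK) := by
  rw [boxSet, Set.mem_Icc]
  constructor <;> intro i <;> simp only [box2] <;> split_ifs with ha hb
  · have : i = e := Fin.ext (by rw [ha, he])
    rw [this]; exact h1
  · have : i = f := Fin.ext (by rw [hb, hf])
    rw [this]; exact h3
  · exact h0 i
  · have : i = e := Fin.ext (by rw [ha, he])
    rw [this]; exact h2
  · have : i = f := Fin.ext (by rw [hb, hf])
    rw [this]; exact h4
  · exact hKp i

lemma bounds_of_mem_box2 {n : ℕ} {I1 I2 J1 J2 K : ℝ} (hI : I1 < I2) (hJ : J1 < J2)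
    (hK : 0 < K) {p : Fin n → ℝ}
    (h : p ∈ boxSet (box2 n I1 I2 J1 J2 K hI hJ hK))
    (hI1 : 0 ≤ I1) (hI2 : I2 ≤ K) (hJ1 : 0 ≤ J1) (hJ2 : J2 ≤ K) :
    ∀ i, 0 ≤ p i ∧ p i ≤ K := by
  intro i
  rw [boxSet, Set.mem_Icc] at h
  have h1 := h.1 i
  have h2 := h.2 i
  simp only [box2] at h1 h2
  split_ifs at h1 h2 <;> constructor <;> linarith

lemma ioo_of_mem_interior_box2 {n : ℕ} {e f : Fin n} (he : (e : ℕ) = 0)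
    (hf : (f : ℕ) = 1)
    {I1 I2 J1 J2 K : ℝ} (hI : I1 < I2) (hJ : J1 < J2) (hK : 0 < K) {p : Fin n → ℝ}
    (h : p ∈ interior (boxSet (box2 n I1 I2 J1 J2 K hI hJ hK))) :
    (I1 < p e ∧ p e < I2) ∧ (J1 < p f ∧ p f < J2) := by
  rw [interior_boxSet, Set.mem_univ_pi] at h
  have h1 := h e
  have h2 := h f
  simp only [box2, he, hf, Set.mem_Ioo] at h1 h2
  norm_num at h1 h2
  exact ⟨h1, h2⟩

/-- The pinwheel partition of the cube of side `y + z - x`. -/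
def pinQ (n : ℕ) (x y z : ℝ) (hx : 0 < x) (hy : 0 < y) (hz : 0 < z)
    (hxy : x < y) (hxz : x < z) : Fin 5 → Box (Fin n) :=
  ![ box2 n 0 y 0 (z-x) (y+z-x) hy (by linarith) (by linarith),
     box2 n y (y+z-x) 0 z (y+z-x) (by linarith) hz (by linarith),
     box2 n (y-x) (y+z-x) z (y+z-x) (y+z-x) (by linarith) (by linarith) (by linarith),
     box2 n 0 (y-x) (z-x) (y+z-x) (y+z-x) (by linarith) (by linarith) (by linarith),
     box2 n (y-x) y (z-x) z (y+z-x) (by linarith) (by linarith) (by linarith) ]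

set_option maxHeartbeats 2000000 in
lemma key (n : ℕ) (hn : 2 ≤ n) (X : Set ℝ) (hX : X ⊆ Set.Ioi 0)
    (hW : PropertyW n X) {x y z : ℝ} (hx : x ∈ X) (hy : y ∈ X) (hz : z ∈ X)
    (hxy : x ≤ y) (hxz : x ≤ z) : y + z - x ∈ X := by
  rcases eq_or_lt_of_le hxy with rfl | hxy
  · simpa using hz
  rcases eq_or_lt_of_le hxz with rfl | hxz
  · simpa using hy
  have hx0 : (0:ℝ) < x := hX hx
  have hy0 : (0:ℝ) < y := hX hy
  have hz0 : (0:ℝ) < z := hX hz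
  have h0n : 0 < n := by omega
  have h1n : 1 < n := by omega
  set e : Fin n := ⟨0, h0n⟩ with he'
  set f : Fin n := ⟨1, h1n⟩ with hf'
  have he : (e : ℕ) = 0 := rfl
  have hf : (f : ℕ) = 1 := rfl
  set Q : Fin 5 → Box (Fin n) := pinQ n x y z hx0 hy0 hz0 hxy hxz with hQ
  set P : Box (Fin n) := ⟨fun _ => 0, fun _ => y + z - x, fun _ => by linarith⟩
    with hP
  have hpart : isBoxPartition P Q := by
    constructor
    · intro j j' hjj'
      rw [Set.disjoint_left]
      intro p hp hq
      fin_cases j <;> fin_cases j' <;>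
        simp only [hQ, pinQ, Matrix.cons_val_zero, Matrix.cons_val_one,
          Matrix.head_cons, Matrix.cons_val_two, Matrix.tail_cons,
          Matrix.cons_val_three, Matrix.cons_val_four] at hp hq <;>
      first
      | exact hjj' rfl
      | (obtain ⟨⟨a1, a2⟩, b1, b2⟩ :=
           ioo_of_mem_interior_box2 he hf (by linarith) (by linarith) (by linarith) hp
         obtain ⟨⟨c1, c2⟩, d1, d2⟩ :=
           ioo_of_mem_interior_box2 he hf (by linarith) (by linarith) (by linarith) hq
         linarith)
    · ext p
      simp only [Set.mem_iUnion]
      constructor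
      · rintro ⟨j, hj⟩
        rw [boxSet, Set.mem_Icc]
        have hb : ∀ i, 0 ≤ p i ∧ p i ≤ y + z - x := by
          fin_cases j <;>
            simp only [hQ, pinQ, Matrix.cons_val_zero, Matrix.cons_val_one,
              Matrix.head_cons, Matrix.cons_val_two, Matrix.tail_cons,
              Matrix.cons_val_three, Matrix.cons_val_four] at hj <;>
          exact bounds_of_mem_box2 (by linarith) (by linarith) (by linarith) hj
            (by linarith) (by linarith) (by linarith) (by linarith)
        exact ⟨fun i => (hb i).1, fun i => (hb i).2⟩
      · intro hp
        rw [boxSet, Set.mem_Icc] at hp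
        have h0 : ∀ i, (0:ℝ) ≤ p i := fun i => hp.1 i
        have hL : ∀ i, p i ≤ y + z - x := fun i => hp.2 i
        rcases le_or_gt (p f) (z - x) with hv | hv
        · rcases le_or_gt (p e) y with hu | hu
          · exact ⟨0, by
              simp only [hQ, pinQ, Matrix.cons_val_zero]
              exact mem_boxSet_box2 he hf h0 hL (h0 e) hu (h0 f) hv⟩
          · exact ⟨1, by
              simp only [hQ, pinQ, Matrix.cons_val_one, Matrix.head_cons, Matrix.cons_val_zero]
              exact mem_boxSet_box2 he hf h0 hL hu.le (hL e) (h0 f)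
                (by linarith)⟩
        · rcases le_or_gt (p e) (y - x) with hu | hu
          · exact ⟨3, by
              simp only [hQ, pinQ, Matrix.cons_val_three, Matrix.head_cons,
                Matrix.tail_cons]
              exact mem_boxSet_box2 he hf h0 hL (h0 e) hu hv.le (hL f)⟩
          · rcases le_or_gt (p f) z with hw | hw
            · rcases le_or_gt (p e) y with hu2 | hu2
              · exact ⟨4, by
                  simp only [hQ, pinQ, Matrix.cons_val_four, Matrix.head_cons,
                    Matrix.tail_cons]
                  exact mem_boxSet_box2 he hf h0 hL hu.le hu2 hv.le hw⟩
              · exact ⟨1, by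
                  simp only [hQ, pinQ, Matrix.cons_val_one, Matrix.head_cons, Matrix.cons_val_zero]
                  exact mem_boxSet_box2 he hf h0 hL hu2.le (hL e) (h0 f) hw⟩
            · exact ⟨2, by
                simp only [hQ, pinQ, Matrix.cons_val_two, Matrix.head_cons,
                  Matrix.tail_cons]
                exact mem_boxSet_box2 he hf h0 hL hu.le (hL e) hw.le (hL f)⟩
  have hside : ∀ j, hasSideIn X (Q j) := by
    intro j
    fin_cases j <;>
      simp only [hQ, pinQ, Matrix.cons_val_zero, Matrix.cons_val_one,
        Matrix.head_cons, Matrix.cons_val_two, Matrix.tail_cons,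
        Matrix.cons_val_three, Matrix.cons_val_four]
    · exact ⟨e, by simp [box2, hasSideIn, he]; simpa using hy⟩
    · exact ⟨f, by simp [box2, hasSideIn, hf]; simpa using hz⟩
    · refine ⟨e, ?_⟩
      simp only [box2, hasSideIn, he]
      norm_num
      exact hz
    · refine ⟨f, ?_⟩
      simp only [box2, hasSideIn, hf]
      norm_num
      exact hy
    · refine ⟨e, ?_⟩
      simp only [box2, hasSideIn, he]
      norm_num
      exact hx
  obtain ⟨i, hi⟩ := hW P 5 Q hpart hside
  simpa [hP] using hi

theorem propertyW_tripod_closed (n : ℕ) (hn : 2 ≤ n) (X : Set ℝ) (hX : X ⊆ Set.Ioi 0)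
    (hW : PropertyW n X) :
    ∀ x ∈ X, ∀ y ∈ X, ∀ z ∈ X, x + y + z - 2 * min x (min y z) ∈ X := by
  intro x hx y hy z hz
  rcases le_total x (min y z) with h | h
  · rw [min_eq_left h]
    have hxy : x ≤ y := le_trans h (min_le_left _ _)
    have hxz : x ≤ z := le_trans h (min_le_right _ _)
    have := key n hn X hX hW hx hy hz hxy hxz
    have heq : x + y + z - 2 * x = y + z - x := by ring
    rw [heq]; exact this
  · rw [min_eq_right h]
    rcases le_total y z with h2 | h2
    · rw [min_eq_left h2]
      have hyx : y ≤ x := le_trans (le_of_eq (min_eq_left h2).symm) h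
      have := key n hn X hX hW hy hx hz hyx h2
      have heq : x + y + z - 2 * y = x + z - y := by ring
      rw [heq]; exact this
    · rw [min_eq_right h2]
      have hzx : z ≤ x := le_trans (le_of_eq (min_eq_right h2).symm) h
      have := key n hn X hX hW hz hx hy hzx h2
      have heq : x + y + z - 2 * z = x + y - z := by ring
      rw [heq]; exact this
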